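/- Every nonempty proper chain-connected metric space that admits a Lipschitz mixer is connected. -/

import Mathlib

lemma nat_chain_cross (P : ℕ → Prop) : ∀ n, P 0 → ¬ P n → ∃ k, k < n ∧ P k ∧ ¬ P (k + 1) := by
  intro n
  induction n with
  | zero => intro h0 hn; exact absurd h0 hn
  | succ n ih =>
    intro h0 hn
    by_cases h : P n
    · exact ⟨n, Nat.lt_succ_self n, h, hn⟩
    · obtain ⟨k, hk, h1, h2⟩ := ih h0 h
      exact ⟨k, hk.trans (Nat.lt_succ_self n), h1, h2⟩

/-- Every nonempty proper chain-connected metric space admitting a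
Lipschitz mixer is connected. -/
theorem proper_chainConnected_lipschitz_mixer_connected
    (X : Type*) [MetricSpace X] [Nonempty X] [ProperSpace X]
    (hchain : ∀ a b : X, ∀ ε : ℝ, 0 < ε → ∃ n : ℕ, ∃ x : Fin (n + 1) → X,
      x 0 = a ∧ x (Fin.last n) = b ∧ ∀ k : Fin n, dist (x k.castSucc) (x k.succ) < ε)
    (L : ℝ) (σ : X → X → X → X)
    (habs : ∀ a b : X, σ a a b = a ∧ σ a b a = a ∧ σ b a a = a)
    (hlip : ∀ a b c a' b' c' : X,
      dist (σ a b c) (σ a' b' c') ≤ L * (dist a a' + dist b b' + dist c c')) :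
    ConnectedSpace X := by
  haveI : PreconnectedSpace X := by
    apply preconnectedSpace_of_forall_constant
    intro f hf a b
    by_contra hab
    set L' : ℝ := max L 1 with hL'def
    have hL' : (0 : ℝ) < L' := lt_of_lt_of_le one_pos (le_max_right _ _)
    have hlip' : ∀ p q r p' q' r' : X,
        dist (σ p q r) (σ p' q' r') ≤ L' * (dist p p' + dist q q' + dist r r') := by
      intro p q r p' q' r'
      refine (hlip p q r p' q' r').trans
        (mul_le_mul_of_nonneg_right (le_max_left _ _) (by positivity))
    set F : X → X := fun z => σ z a b with hF
    have hFK : ∀ z, F z ∈ Metric.closedBall a (L' * dist b a) := by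
      intro z
      have h1 : σ z a a = a := (habs a z).2.2
      have h2 := hlip' z a b z a a
      rw [h1] at h2
      simpa [Metric.mem_closedBall, F] using h2
    have hFa : F a = a := (habs a b).1
    have hFb : F b = b := (habs b a).2.1
    set U : Set X := f ⁻¹' {f a} with hU
    have hUclopen : IsClopen U := (isClopen_discrete {f a}).preimage hf
    set K := Metric.closedBall a (L' * dist b a) with hK
    have hs : IsCompact (U ∩ K) :=
      (isCompact_closedBall a _).inter_left hUclopen.isClosed
    have ht : IsClosed (Uᶜ ∩ K) :=
      hUclopen.compl.isClosed.inter Metric.isClosed_closedBall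
    have hdisj : Disjoint (U ∩ K) (Uᶜ ∩ K) :=
      Disjoint.mono Set.inter_subset_left Set.inter_subset_left disjoint_compl_right
    obtain ⟨r, hr, hsep⟩ := EMetric.exists_pos_forall_lt_edist hs ht hdisj
    have hrR : (0 : ℝ) < r := hr
    set ε : ℝ := r / L' with hε'
    have hε : 0 < ε := div_pos hrR hL'
    obtain ⟨m, x, hx0, hxm, hstep⟩ := hchain a b ε hε
    set g : ℕ → X := fun k => x ⟨min k m, by omega⟩ with hg
    have hP0 : f (F (g 0)) = f a := by
      have : g 0 = a := by simpa [hg] using hx0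
      rw [this, hFa]
    have hPm : ¬ f (F (g m)) = f a := by
      have : g m = b := by simp only [hg, min_self]; exact hxm
      rw [this, hFb]
      exact fun h => hab h.symm
    obtain ⟨k, hkm, hPk, hPk1⟩ := nat_chain_cross (fun k => f (F (g k)) = f a) m hP0 hPm
    have hd : dist (g k) (g (k + 1)) < ε := by
      have h := hstep ⟨k, hkm⟩
      have e1 : g k = x (Fin.castSucc ⟨k, hkm⟩) := by
        simp [hg, Fin.castSucc, Nat.min_eq_left hkm.le]
      have e2 : g (k + 1) = x (Fin.succ ⟨k, hkm⟩) := by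
        simp [hg, Fin.succ, Nat.min_eq_left hkm]
      rw [e1, e2]
      exact h
    have hclose : dist (F (g k)) (F (g (k + 1))) ≤ L' * dist (g k) (g (k + 1)) := by
      have := hlip' (g k) a b (g (k + 1)) a b
      simpa [F] using this
    have hfar := hsep (F (g k)) ⟨hPk, hFK _⟩ (F (g (k + 1))) ⟨hPk1, hFK _⟩
    have hfar' : (r : ℝ) < dist (F (g k)) (F (g (k + 1))) := by
      rw [edist_dist, ← ENNReal.ofReal_coe_nnreal] at hfar
      exact (ENNReal.ofReal_lt_ofReal_iff_of_nonneg r.2).mp hfar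
    have : dist (F (g k)) (F (g (k + 1))) < r := by
      have h2 : L' * dist (g k) (g (k + 1)) < L' * ε := by
        exact mul_lt_mul_of_pos_left hd hL'
      have h3 : L' * ε = r := by
        rw [hε', mul_div_cancel₀ _ (ne_of_gt hL')]
      linarith
    linarith
  exact ⟨‹Nonempty X›⟩
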